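/- Let (X, Σ, λ) be a σ-finite measure space and let f ∈ L¹(X, λ) be nonzero (i.e., f is not λ-almost everywhere zero). Then f is a right-symmetric point of L¹(X, λ) if and only if there exists a λ-atom A such that f(x) = 0 for λ-almost every x ∈ X \ A. -/

import Mathlib

open MeasureTheory
open scoped ENNReal

/-- A `μ`-atom: a set of positive measure all of whose measurable subsets are either
null or conull in it. -/
def IsMeasAtom {X : Type*} [MeasurableSpace X] (μ : Measure X) (A : Set X) : Prop :=
  MeasurableSet A ∧ 0 < μ A ∧
    ∀ B : Set X, B ⊆ A → MeasurableSet B → μ B = 0 ∨ μ (A \ B) = 0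

lemma atom_ae_const_real {X : Type*} [MeasurableSpace X] {μ : Measure X} {A : Set X}
    (hA : IsMeasAtom μ A) {u : X → ℝ} (hu : Measurable u) :
    ∃ c : ℝ, ∀ᵐ x ∂μ.restrict A, u x = c := by
  obtain ⟨hAm, hA0, hdich⟩ := hA
  set T : Set ℝ := {t | μ (A ∩ {x | t < u x}) = 0} with hT
  have key : ∀ t : ℝ, μ (A ∩ {x | u x ≤ t}) = 0 ∨ t ∈ T := by
    intro t
    have hdiff : A \ (A ∩ {x | u x ≤ t}) = A ∩ {x | t < u x} := by
      ext x; simp only [Set.mem_diff, Set.mem_inter_iff, Set.mem_setOf_eq, not_and, not_le]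
      tauto
    rcases hdich (A ∩ {x | u x ≤ t}) Set.inter_subset_left
      (hAm.inter (hu measurableSet_Iic)) with h | h
    · exact Or.inl h
    · right; rwa [hdiff] at h
  have Tup : ∀ t ∈ T, ∀ s, t ≤ s → s ∈ T := by
    intro t ht s hts
    exact measure_mono_null (Set.inter_subset_inter_right _
      (fun x hx => lt_of_le_of_lt hts hx)) ht
  have hTne : T.Nonempty := by
    by_contra h
    rw [Set.not_nonempty_iff_eq_empty] at h
    have h' : ∀ n : ℕ, μ (A ∩ {x | u x ≤ (n : ℝ)}) = 0 := by
      intro n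
      rcases key n with h1 | h1
      · exact h1
      · exact absurd h1 (by simp [h])
    have hcover : A ⊆ ⋃ n : ℕ, A ∩ {x | u x ≤ (n : ℝ)} := by
      intro x hx
      obtain ⟨n, hn⟩ := exists_nat_ge (u x)
      exact Set.mem_iUnion.2 ⟨n, hx, hn⟩
    exact absurd (measure_mono_null hcover (measure_iUnion_null h')) hA0.ne'
  have hLne : ∃ l : ℝ, μ (A ∩ {x | u x ≤ l}) = 0 := by
    by_contra h
    push_neg at h
    have h' : ∀ n : ℕ, μ (A ∩ {x | (-(n:ℝ)) < u x}) = 0 := by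
      intro n
      rcases key (-(n:ℝ)) with h1 | h1
      · exact absurd h1 (h _)
      · exact h1
    have hcover : A ⊆ ⋃ n : ℕ, A ∩ {x | (-(n:ℝ)) < u x} := by
      intro x hx
      obtain ⟨n, hn⟩ := exists_nat_gt (-u x)
      exact Set.mem_iUnion.2 ⟨n, hx, show (-(n:ℝ)) < u x by linarith⟩
    exact absurd (measure_mono_null hcover (measure_iUnion_null h')) hA0.ne'
  obtain ⟨l, hl⟩ := hLne
  have hbdd : BddBelow T := by
    refine ⟨l, fun t ht => ?_⟩
    by_contra hlt
    push_neg at hlt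
    have hcover : A ⊆ (A ∩ {x | u x ≤ l}) ∪ (A ∩ {x | t < u x}) := by
      intro x hx
      rcases le_or_gt (u x) l with h1 | h1
      · exact Or.inl ⟨hx, h1⟩
      · exact Or.inr ⟨hx, lt_trans hlt h1⟩
    exact absurd (measure_mono_null hcover (measure_union_null hl ht)) hA0.ne'
  set c := sInf T with hc
  have up : ∀ q : ℝ, c < q → q ∈ T := by
    intro q hq
    obtain ⟨t, ht, htq⟩ := exists_lt_of_csInf_lt hTne hq
    exact Tup t ht q htq.le
  have down : ∀ q : ℝ, q < c → μ (A ∩ {x | u x ≤ q}) = 0 := by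
    intro q hq
    rcases key q with h1 | h1
    · exact h1
    · exact absurd (csInf_le hbdd h1) (not_le.2 hq)
  have null1 : μ (A ∩ {x | c < u x}) = 0 := by
    have hsub : (A ∩ {x | c < u x}) ⊆ ⋃ q : ℚ, {x | x ∈ A ∧ c < (q:ℝ) ∧ (q:ℝ) < u x} := by
      rintro x ⟨hxA, hx⟩
      simp only [Set.mem_setOf_eq] at hx
      obtain ⟨q, hq1, hq2⟩ := exists_rat_btwn hx
      exact Set.mem_iUnion.2 ⟨q, hxA, hq1, hq2⟩
    refine measure_mono_null hsub (measure_iUnion_null fun q => ?_)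
    by_cases hq : c < (q:ℝ)
    · refine measure_mono_null ?_ (up q hq)
      rintro x ⟨h1, _, h3⟩; exact ⟨h1, h3⟩
    · have : {x | x ∈ A ∧ c < (q:ℝ) ∧ (q:ℝ) < u x} = ∅ := by
        ext x; simp only [Set.mem_setOf_eq, Set.mem_empty_iff_false, iff_false]
        tauto
      simp [this]
  have null2 : μ (A ∩ {x | u x < c}) = 0 := by
    have hsub : (A ∩ {x | u x < c}) ⊆ ⋃ q : ℚ, {x | x ∈ A ∧ (q:ℝ) < c ∧ u x ≤ (q:ℝ)} := by
      rintro x ⟨hxA, hx⟩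
      simp only [Set.mem_setOf_eq] at hx
      obtain ⟨q, hq1, hq2⟩ := exists_rat_btwn hx
      exact Set.mem_iUnion.2 ⟨q, hxA, hq2, hq1.le⟩
    refine measure_mono_null hsub (measure_iUnion_null fun q => ?_)
    by_cases hq : (q:ℝ) < c
    · refine measure_mono_null ?_ (down q hq)
      rintro x ⟨h1, _, h3⟩; exact ⟨h1, h3⟩
    · have : {x | x ∈ A ∧ (q:ℝ) < c ∧ u x ≤ (q:ℝ)} = ∅ := by
        ext x; simp only [Set.mem_setOf_eq, Set.mem_empty_iff_false, iff_false]
        tauto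
      simp [this]
  refine ⟨c, ?_⟩
  rw [ae_iff, Measure.restrict_apply]
  · refine measure_mono_null (fun x hx => ?_) (measure_union_null null1 null2)
    obtain ⟨hne, hxA⟩ := hx
    rcases lt_or_gt_of_ne (show u x ≠ c from hne) with h1 | h1
    · exact Or.inr ⟨hxA, h1⟩
    · exact Or.inl ⟨hxA, h1⟩
  · exact (hu (measurableSet_singleton c)).compl

lemma atom_ae_const_complex {X : Type*} [MeasurableSpace X] {μ : Measure X} {A : Set X}
    (hA : IsMeasAtom μ A) {h : X → ℂ} (hm : Measurable h) :
    ∃ c : ℂ, ∀ᵐ x ∂μ.restrict A, h x = c := by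
  obtain ⟨a, ha⟩ := atom_ae_const_real hA (Complex.measurable_re.comp hm)
  obtain ⟨b, hb⟩ := atom_ae_const_real hA (Complex.measurable_im.comp hm)
  refine ⟨⟨a, b⟩, ?_⟩
  filter_upwards [ha, hb] with x h1 h2
  exact Complex.ext h1 h2

lemma norm_L1_split {X : Type*} [MeasurableSpace X] {μ : Measure X}
    (h : Lp ℂ 1 μ) {A : Set X} (hAm : MeasurableSet A) :
    ‖h‖ = (∫ x in A, ‖h x‖ ∂μ) + ∫ x in Aᶜ, ‖h x‖ ∂μ := by
  rw [L1.norm_eq_integral_norm, ← integral_add_compl hAm (L1.integrable_coeFn h).norm]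

lemma easy_dir {X : Type*} [MeasurableSpace X] {μ : Measure X}
    (f : Lp ℂ 1 μ) (hf : f ≠ 0) {A : Set X} (hA : IsMeasAtom μ A)
    (hfA : ∀ᵐ x ∂μ.restrict Aᶜ, f x = 0)
    (g : Lp ℂ 1 μ) (hg : ∀ c : ℂ, ‖g‖ ≤ ‖g + c • f‖) (c : ℂ) :
    ‖f‖ ≤ ‖f + c • g‖ := by
  obtain ⟨hAm, hA0, hdich⟩ := hA
  obtain ⟨α, hα⟩ := atom_ae_const_complex ⟨hAm, hA0, hdich⟩
    (Lp.stronglyMeasurable f).measurable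
  obtain ⟨β, hβ⟩ := atom_ae_const_complex ⟨hAm, hA0, hdich⟩
    (Lp.stronglyMeasurable g).measurable
  -- α ≠ 0
  have hα0 : α ≠ 0 := by
    intro h0
    apply hf
    rw [Lp.eq_zero_iff_ae_eq_zero]
    have h1 := (ae_restrict_iff' hAm).mp hα
    have h2 := (ae_restrict_iff' hAm.compl).mp hfA
    filter_upwards [h1, h2] with x k1 k2
    by_cases hx : x ∈ A
    · simpa [h0] using k1 hx
    · exact k2 hx
  -- μ A < ∞
  have hμA : μ A < ∞ := by
    have hint : IntegrableOn (fun _ : X => α) A μ :=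
      ((L1.integrable_coeFn f).integrableOn).congr hα
    rcases (integrableOn_const_iff (C := α)).mp hint with h0 | h0
    · exact absurd (enorm_eq_zero.mp h0) hα0
    · exact h0
  have hμAtop : (μ A).toReal > 0 := ENNReal.toReal_pos hA0.ne' hμA.ne
  -- β = 0
  have hβ0 : β = 0 := by
    set c₀ : ℂ := -β / α with hc₀
    have hcoe : ⇑(g + c₀ • f) =ᵐ[μ] fun x => g x + c₀ * f x := by
      filter_upwards [Lp.coeFn_add g (c₀ • f), Lp.coeFn_smul c₀ f] with x h1 h2
      rw [h1]; simp [h2]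
    have hIsum : Integrable (fun x => g x + c₀ * f x) μ :=
      (L1.integrable_coeFn (g + c₀ • f)).congr hcoe
    have norm1 : ‖g + c₀ • f‖ = ∫ x in Aᶜ, ‖g x‖ ∂μ := by
      rw [norm_L1_split _ hAm]
      have e1 : (∫ x in A, ‖(g + c₀ • f) x‖ ∂μ) = 0 := by
        rw [integral_eq_zero_iff_of_nonneg]
        · filter_upwards [hα, hβ, ae_restrict_of_ae hcoe] with x k1 k2 k3
          rw [k3, k1, k2, hc₀]
          field_simp
          simp
        · exact fun x => norm_nonneg _
        · exact (hIsum.congr hcoe.symm).norm.integrableOn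
      have e2 : (∫ x in Aᶜ, ‖(g + c₀ • f) x‖ ∂μ) = ∫ x in Aᶜ, ‖g x‖ ∂μ := by
        refine integral_congr_ae ?_
        filter_upwards [hfA, ae_restrict_of_ae hcoe] with x k1 k2
        rw [k2, k1]; simp
      rw [e1, e2, zero_add]
    have norm2 : ‖g‖ = ‖β‖ * (μ A).toReal + ∫ x in Aᶜ, ‖g x‖ ∂μ := by
      rw [norm_L1_split _ hAm]
      congr 1
      have : (∫ x in A, ‖g x‖ ∂μ) = ∫ _x in A, ‖β‖ ∂μ := by
        refine integral_congr_ae ?_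
        filter_upwards [hβ] with x k1
        rw [k1]
      rw [this, setIntegral_const, smul_eq_mul, mul_comm, measureReal_def]
    have := hg c₀
    rw [norm1, norm2] at this
    have hβle : ‖β‖ * (μ A).toReal ≤ 0 := by linarith
    have : ‖β‖ ≤ 0 := nonpos_of_mul_nonpos_right ?_ hμAtop
    · simpa using le_antisymm this (norm_nonneg β)
    · linarith
  -- conclusion
  have hcoe : ⇑(f + c • g) =ᵐ[μ] fun x => f x + c * g x := by
    filter_upwards [Lp.coeFn_add f (c • g), Lp.coeFn_smul c g] with x h1 h2
    rw [h1]; simp [h2]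
  have hIsum : Integrable (fun x => f x + c * g x) μ :=
    (L1.integrable_coeFn (f + c • g)).congr hcoe
  have normf : ‖f‖ = ∫ x in A, ‖f x‖ ∂μ := by
    rw [norm_L1_split _ hAm]
    have e2 : (∫ x in Aᶜ, ‖f x‖ ∂μ) = 0 := by
      rw [integral_eq_zero_iff_of_nonneg]
      · filter_upwards [hfA] with x k1; rw [k1]; simp
      · exact fun x => norm_nonneg _
      · exact (L1.integrable_coeFn f).norm.integrableOn
    rw [e2, add_zero]
  rw [norm_L1_split (f + c • g) hAm, normf]
  have e1 : (∫ x in A, ‖(f + c • g) x‖ ∂μ) = ∫ x in A, ‖f x‖ ∂μ := by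
    refine integral_congr_ae ?_
    filter_upwards [hβ, ae_restrict_of_ae hcoe] with x k1 k2
    rw [k2, k1, hβ0]; simp
  rw [e1]
  have e2 : 0 ≤ ∫ x in Aᶜ, ‖(f + c • g) x‖ ∂μ := integral_nonneg fun x => norm_nonneg _
  linarith

lemma hard_dir {X : Type*} [MeasurableSpace X] {μ : Measure X} [SigmaFinite μ]
    (f : Lp ℂ 1 μ) (hf : f ≠ 0)
    (H : ∀ g : Lp ℂ 1 μ, (∀ c : ℂ, ‖g‖ ≤ ‖g + c • f‖) → (∀ c : ℂ, ‖f‖ ≤ ‖f + c • g‖)) :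
    ∃ A : Set X, IsMeasAtom μ A ∧ (∀ᵐ x ∂μ.restrict Aᶜ, f x = 0) := by
  have hm : Measurable ⇑f := (Lp.stronglyMeasurable f).measurable
  set S : Set X := {x | f x ≠ 0} with hS
  have hSm : MeasurableSet S := (hm (measurableSet_singleton 0)).compl
  have hfA : ∀ᵐ x ∂μ.restrict Sᶜ, f x = 0 := by
    refine ae_restrict_of_forall_mem hSm.compl fun x hx => ?_
    simpa [hS] using hx
  have hS0 : 0 < μ S := by
    rcases eq_zero_or_pos (μ S) with h0 | h0
    · exfalso; apply hf
      rw [Lp.eq_zero_iff_ae_eq_zero, Filter.EventuallyEq, ae_iff]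
      simpa [hS] using h0
    · exact h0
  set ν : Measure X := μ.withDensity fun x => (‖f x‖₊ : ℝ≥0∞) with hν
  have hνac : ν ≪ μ := withDensity_absolutelyContinuous μ _
  have hνapp : ∀ B : Set X, MeasurableSet B → ν B = ∫⁻ x in B, (‖f x‖₊ : ℝ≥0∞) ∂μ :=
    fun B hB => withDensity_apply _ hB
  have hνfin : ν Set.univ < ∞ := by
    rw [hνapp _ MeasurableSet.univ, Measure.restrict_univ]
    exact (L1.integrable_coeFn f).2
  -- ν-null subsets of S are μ-null
  have key : ∀ C : Set X, C ⊆ S → MeasurableSet C → ν C = 0 → μ C = 0 := by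
    intro C hCS hCm h0
    rw [hνapp _ hCm] at h0
    have hz := (setLIntegral_eq_zero_iff hCm (hm.nnnorm.coe_nnreal_ennreal)).mp h0
    have hnull : μ {x | ¬ (x ∈ C → ((‖f x‖₊ : ℝ≥0∞) = 0))} = 0 := ae_iff.mp hz
    refine measure_mono_null (fun x hx => ?_) hnull
    have : f x ≠ 0 := hCS hx
    simp only [Set.mem_setOf_eq, Classical.not_imp]
    exact ⟨hx, by simpa using this⟩
  by_cases hcase : ∀ B : Set X, B ⊆ S → MeasurableSet B → ν B = 0 ∨ ν (S \ B) = 0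
  · refine ⟨S, ⟨hSm, hS0, fun B hBS hBm => ?_⟩, hfA⟩
    rcases hcase B hBS hBm with h | h
    · exact Or.inl (key B hBS hBm h)
    · exact Or.inr (key (S \ B) Set.diff_subset (hSm.diff hBm) h)
  · exfalso
    push_neg at hcase
    obtain ⟨B, hBS, hBm, hνB, hνSB⟩ := hcase
    -- WLOG ν B ≤ ν (S \ B); produce C
    obtain ⟨C, hCS, hCm, hνC, hle⟩ :
        ∃ C : Set X, C ⊆ S ∧ MeasurableSet C ∧ ν C ≠ 0 ∧ ν C ≤ ν (S \ C) := by
      rcases le_total (ν B) (ν (S \ B)) with h | h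
      · exact ⟨B, hBS, hBm, hνB, h⟩
      · refine ⟨S \ B, Set.diff_subset, hSm.diff hBm, hνSB, ?_⟩
        rwa [Set.diff_diff_cancel_left hBS]
    -- shrink to finite measure
    obtain ⟨n, hn⟩ : ∃ n : ℕ, ν (C ∩ spanningSets μ n) ≠ 0 := by
      by_contra h
      push_neg at h
      apply hνC
      have : C = ⋃ n : ℕ, C ∩ spanningSets μ n := by
        rw [← Set.inter_iUnion, iUnion_spanningSets, Set.inter_univ]
      rw [this]
      exact measure_iUnion_null h
    set B' : Set X := C ∩ spanningSets μ n with hB'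
    have hB'S : B' ⊆ S := fun x hx => hCS hx.1
    have hB'm : MeasurableSet B' := hCm.inter (measurableSet_spanningSets μ n)
    have hB'fin : μ B' < ∞ :=
      lt_of_le_of_lt (measure_mono Set.inter_subset_right) (measure_spanningSets_lt_top μ n)
    have hB'pos : 0 < μ B' := by
      rcases eq_zero_or_pos (μ B') with h0 | h0
      · exact absurd (hνac h0) hn
      · exact h0
    have hmass : ν B' ≤ ν B'ᶜ := by
      calc ν B' ≤ ν C := measure_mono Set.inter_subset_left
        _ ≤ ν (S \ C) := hle
        _ ≤ ν Cᶜ := measure_mono (Set.diff_subset_compl _ _)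
        _ ≤ ν B'ᶜ := measure_mono (Set.compl_subset_compl.2 Set.inter_subset_left)
    -- construct g
    set sg : X → ℂ := fun x => ‖f x‖⁻¹ • f x with hsdef
    have hsmeas : Measurable sg := (hm.norm.inv).smul hm
    have hsnorm : ∀ x ∈ S, ‖sg x‖ = 1 := by
      intro x hx
      have hfx : f x ≠ 0 := hx
      have hr : ‖f x‖ ≠ 0 := norm_ne_zero_iff.2 hfx
      rw [hsdef]
      simp only [norm_smul, Real.norm_eq_abs, abs_inv, abs_norm]
      rw [inv_mul_cancel₀ hr]
    set g0 : X → ℂ := B'.indicator sg with hg0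
    have hg0norm : ∀ x, ‖g0 x‖ = B'.indicator (fun _ => (1:ℝ)) x := by
      intro x
      by_cases hx : x ∈ B'
      · rw [hg0]; simp only [Set.indicator_of_mem hx]; exact hsnorm x (hB'S hx)
      · rw [hg0]; simp [Set.indicator_of_notMem hx]
    have hIind : Integrable (B'.indicator fun _ => (1:ℝ)) μ :=
      IntegrableOn.integrable_indicator (integrableOn_const hB'fin.ne) hB'm
    have hg0meas : Measurable g0 := hsmeas.indicator hB'm
    have hg0int : Integrable g0 μ := by
      refine Integrable.mono' hIind hg0meas.aestronglyMeasurable ?_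
      filter_upwards with x
      rw [hg0norm x]
    have hgmem : MemLp g0 1 μ := memLp_one_iff_integrable.mpr hg0int
    set g : Lp ℂ 1 μ := hgmem.toLp g0 with hgdef
    have hgcoe : ⇑g =ᵐ[μ] g0 := hgmem.coeFn_toLp
    set m : ℝ := (μ B').toReal with hmdef
    have hmpos : 0 < m := ENNReal.toReal_pos hB'pos.ne' hB'fin.ne
    have hIB : IntegrableOn (fun x => ‖f x‖) B' μ := (L1.integrable_coeFn f).norm.integrableOn
    set IB : ℝ := ∫ x in B', ‖f x‖ ∂μ with hIBdef
    set IBc : ℝ := ∫ x in B'ᶜ, ‖f x‖ ∂μ with hIBcdef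
    -- mass inequality in ℝ
    have hsetnorm : ∀ E : Set X, MeasurableSet E → (∫ x in E, ‖f x‖ ∂μ) = (ν E).toReal := by
      intro E hE
      rw [hνapp E hE, integral_norm_eq_lintegral_enorm
        ((Lp.stronglyMeasurable f).aestronglyMeasurable.restrict)]
      rfl
    have hmassR : IB ≤ IBc := by
      rw [hIBdef, hIBcdef, hsetnorm _ hB'm, hsetnorm _ hB'm.compl]
      exact ENNReal.toReal_mono (lt_of_le_of_lt (measure_mono (Set.subset_univ _)) hνfin).ne hmass
    -- ‖g‖ = m
    have hnormg : ‖g‖ = m := by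
      rw [L1.norm_eq_integral_norm]
      have e1 : (∫ x, ‖g x‖ ∂μ) = ∫ x, ‖g0 x‖ ∂μ := by
        refine integral_congr_ae ?_
        filter_upwards [hgcoe] with x hx
        rw [hx]
      rw [e1]
      have e2 : (fun x => ‖g0 x‖) = B'.indicator (fun _ => (1:ℝ)) := funext hg0norm
      rw [e2, integral_indicator_const (1:ℝ) hB'm, smul_eq_mul, mul_one, measureReal_def]
    -- the premise: g is BJ-orthogonal to f
    have hprem : ∀ c : ℂ, ‖g‖ ≤ ‖g + c • f‖ := by
      intro c
      have hcoe : ⇑(g + c • f) =ᵐ[μ] fun x => g0 x + c * f x := by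
        filter_upwards [Lp.coeFn_add g (c • f), Lp.coeFn_smul c f, hgcoe] with x h1 h2 h3
        rw [h1]
        simp only [Pi.add_apply, h2, h3, Pi.smul_apply, smul_eq_mul]
      have hint : Integrable (fun x => g0 x + c * f x) μ :=
        (L1.integrable_coeFn (g + c • f)).congr hcoe
      have hnorm : ‖g + c • f‖ = ∫ x, ‖g0 x + c * f x‖ ∂μ := by
        rw [L1.norm_eq_integral_norm]
        refine integral_congr_ae ?_
        filter_upwards [hcoe] with x hx
        rw [hx]
      rw [hnorm, hnormg, ← integral_add_compl hB'm hint.norm]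
      have hb1 : m - ‖c‖ * IB ≤ ∫ x in B', ‖g0 x + c * f x‖ ∂μ := by
        have hpt : ∀ x ∈ B', 1 - ‖c‖ * ‖f x‖ ≤ ‖g0 x + c * f x‖ := by
          intro x hx
          have h1 : ‖g0 x‖ = 1 := by rw [hg0norm x, Set.indicator_of_mem hx]
          have h2 : ‖g0 x‖ ≤ ‖g0 x + c * f x‖ + ‖c * f x‖ := by
            calc ‖g0 x‖ = ‖g0 x + c * f x + -(c * f x)‖ := by rw [add_neg_cancel_right]
              _ ≤ ‖g0 x + c * f x‖ + ‖-(c * f x)‖ := norm_add_le _ _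
              _ = ‖g0 x + c * f x‖ + ‖c * f x‖ := by rw [norm_neg]
          rw [h1, norm_mul] at h2
          linarith
        have hIle : IntegrableOn (fun x => 1 - ‖c‖ * ‖f x‖) B' μ :=
          (integrableOn_const hB'fin.ne).sub (hIB.const_mul _)
        have hmono := setIntegral_mono_on hIle hint.norm.integrableOn hB'm hpt
        calc m - ‖c‖ * IB = ∫ x in B', (1 - ‖c‖ * ‖f x‖) ∂μ := by
              rw [integral_sub (integrableOn_const hB'fin.ne : Integrable (fun _ => (1:ℝ)) (μ.restrict B')) (hIB.const_mul _),
                setIntegral_const, integral_const_mul, smul_eq_mul, mul_one, measureReal_def]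
          _ ≤ _ := hmono
      have hb2 : (∫ x in B'ᶜ, ‖g0 x + c * f x‖ ∂μ) = ‖c‖ * IBc := by
        have e1 : (∫ x in B'ᶜ, ‖g0 x + c * f x‖ ∂μ) = ∫ x in B'ᶜ, ‖c‖ * ‖f x‖ ∂μ := by
          refine setIntegral_congr_fun hB'm.compl fun x hx => ?_
          have : g0 x = 0 := Set.indicator_of_notMem hx _
          rw [this, zero_add, norm_mul]
        rw [e1, integral_const_mul]
      rw [hb2]
      have : ‖c‖ * IB ≤ ‖c‖ * IBc := mul_le_mul_of_nonneg_left hmassR (norm_nonneg c)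
      linarith
    have hconcl := H g hprem
    -- choose a small threshold t
    set D : ℕ → Set X := fun k => B' ∩ {x | ‖f x‖ ≤ 1/(k+1)} with hDdef
    have hDm : ∀ k, MeasurableSet (D k) := fun k => hB'm.inter (hm.norm measurableSet_Iic)
    have hDsub : ∀ k, D k ⊆ B' := fun k => Set.inter_subset_left
    have hDanti : Antitone D := by
      intro a b hab x hx
      obtain ⟨hx1, hx2⟩ := hx
      refine ⟨hx1, ?_⟩
      simp only [Set.mem_setOf_eq] at hx2 ⊢
      refine le_trans hx2 (one_div_le_one_div_of_le (by positivity) ?_)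
      have : (a:ℝ) ≤ b := by exact_mod_cast hab
      linarith
    have hDempty : ⋂ k, D k = ∅ := by
      ext x
      simp only [Set.mem_iInter, Set.mem_empty_iff_false, iff_false]
      intro hall
      have hfx : f x ≠ 0 := hB'S (hall 0).1
      have hpos : 0 < ‖f x‖ := norm_pos_iff.2 hfx
      obtain ⟨k, hk⟩ := exists_nat_one_div_lt hpos
      exact absurd ((hall k).2) (not_le.2 hk)
    have htend : Filter.Tendsto (fun k => μ (D k)) Filter.atTop (nhds 0) := by
      have h := tendsto_measure_iInter_atTop (fun k => (hDm k).nullMeasurableSet) hDanti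
        ⟨0, (lt_of_le_of_lt (measure_mono (hDsub 0)) hB'fin).ne⟩
      rwa [hDempty, measure_empty] at h
    have hhalf : (0:ℝ≥0∞) < μ B' / 2 := ENNReal.half_pos hB'pos.ne'
    obtain ⟨k, hk⟩ := (htend.eventually_lt_const hhalf).exists
    set t : ℝ := 1/(k+1) with htdef
    have htpos : 0 < t := by positivity
    set d : ℝ := (μ (D k)).toReal with hddef
    have hdlt : 2 * d < m := by
      have hfin2 : μ B' / 2 ≠ ∞ := (lt_of_le_of_lt ENNReal.half_le_self hB'fin).ne
      have hDkfin : μ (D k) < ∞ := hk.trans (lt_of_le_of_lt ENNReal.half_le_self hB'fin)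
      have h1 : d < (μ B' / 2).toReal := (ENNReal.toReal_lt_toReal hDkfin.ne hfin2).mpr hk
      rw [ENNReal.toReal_div] at h1
      simp only [ENNReal.toReal_ofNat] at h1
      rw [hddef] at h1 ⊢
      rw [hmdef]
      linarith
    -- contradiction with hconcl at c = -t
    have hDkfin' : μ (D k) < ∞ := lt_of_le_of_lt (measure_mono (hDsub k)) hB'fin
    set c : ℂ := ((-t : ℝ) : ℂ) with hcdef
    have hfc := hconcl c
    have hcoe : ⇑(f + c • g) =ᵐ[μ] fun x => f x + c * g0 x := by
      filter_upwards [Lp.coeFn_add f (c • g), Lp.coeFn_smul c g, hgcoe] with x h1 h2 h3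
      rw [h1]
      simp only [Pi.add_apply, h2, Pi.smul_apply, smul_eq_mul, h3]
    have hint : Integrable (fun x => f x + c * g0 x) μ :=
      (L1.integrable_coeFn (f + c • g)).congr hcoe
    have hnorm : ‖f + c • g‖ = ∫ x, ‖f x + c * g0 x‖ ∂μ := by
      rw [L1.norm_eq_integral_norm]
      exact integral_congr_ae (by filter_upwards [hcoe] with x hx; rw [hx])
    have hnormf : ‖f‖ = IB + IBc := norm_L1_split f hB'm
    have hptB : ∀ x ∈ B',
        ‖f x + c * g0 x‖ ≤ ‖f x‖ - t + (2*t) * (D k).indicator (fun _ => (1:ℝ)) x := by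
      intro x hx
      have hfx : f x ≠ 0 := hB'S hx
      have hr : 0 < ‖f x‖ := norm_pos_iff.2 hfx
      have hg0x : g0 x = ‖f x‖⁻¹ • f x := by rw [hg0, Set.indicator_of_mem hx]
      have hcalc : f x + c * g0 x = ((1 - t * ‖f x‖⁻¹) : ℝ) • f x := by
        rw [hg0x, hcdef, ← Complex.real_smul, smul_smul]
        nth_rewrite 1 [← one_smul ℝ (f x)]
        rw [← add_smul]
        congr 1
        ring
      rw [hcalc, norm_smul, Real.norm_eq_abs]
      have habs : |1 - t * ‖f x‖⁻¹| * ‖f x‖ = |‖f x‖ - t| := by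
        have h1 : (1 - t * ‖f x‖⁻¹) * ‖f x‖ = ‖f x‖ - t := by
          have hne : ‖f x‖ ≠ 0 := hr.ne'
          field_simp [hne]
        rw [← h1, abs_mul, abs_of_nonneg hr.le]
      rw [habs]
      by_cases hxD : x ∈ D k
      · rw [Set.indicator_of_mem hxD]
        have h2 : ‖f x‖ ≤ t := by rw [htdef]; exact hxD.2
        rw [abs_of_nonpos (by linarith)]
        linarith
      · rw [Set.indicator_of_notMem hxD]
        have h2 : t ≤ ‖f x‖ := by
          by_contra hle
          push_neg at hle
          refine hxD ⟨hx, ?_⟩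
          show ‖f x‖ ≤ 1/(k+1)
          rw [← htdef]
          exact hle.le
        rw [abs_of_nonneg (by linarith)]
        linarith
    have hIndD : Integrable ((D k).indicator fun _ => (1:ℝ)) μ :=
      IntegrableOn.integrable_indicator (integrableOn_const hDkfin'.ne) (hDm k)
    have hconstint : IntegrableOn (fun _ : X => t) B' μ :=
      integrableOn_const hB'fin.ne
    have hsubint : IntegrableOn (fun x => ‖f x‖ - t) B' μ := hIB.sub hconstint
    have hindon : IntegrableOn (fun x => (2*t) * (D k).indicator (fun _ => (1:ℝ)) x) B' μ :=
      (hIndD.const_mul _).integrableOn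
    have hRHSint : IntegrableOn
        (fun x => ‖f x‖ - t + (2*t) * (D k).indicator (fun _ => (1:ℝ)) x) B' μ :=
      hsubint.add hindon
    have hb1 := setIntegral_mono_on hint.norm.integrableOn hRHSint hB'm hptB
    have hIndval : (∫ x in B', (D k).indicator (fun _ => (1:ℝ)) x ∂μ) = d := by
      rw [integral_indicator_const (1:ℝ) (hDm k), measureReal_restrict_apply (hDm k),
        Set.inter_eq_self_of_subset_left (hDsub k), smul_eq_mul, mul_one, measureReal_def]
    have hRHSval : (∫ x in B', (‖f x‖ - t + (2*t) * (D k).indicator (fun _ => (1:ℝ)) x) ∂μ)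
        = IB - t * m + 2 * t * d := by
      rw [integral_add hsubint hindon, integral_sub hIB hconstint, setIntegral_const,
        integral_const_mul, hIndval, smul_eq_mul, measureReal_def]
      ring
    have hcompl : (∫ x in B'ᶜ, ‖f x + c * g0 x‖ ∂μ) = IBc := by
      refine setIntegral_congr_fun hB'm.compl fun x hx => ?_
      have h0 : g0 x = 0 := Set.indicator_of_notMem hx _
      rw [h0, mul_zero, add_zero]
    have hfinal : ‖f + c • g‖ < ‖f‖ := by
      rw [hnorm, ← integral_add_compl hB'm hint.norm, hcompl, hnormf]
      have hle2 := le_trans hb1 (le_of_eq hRHSval)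
      nlinarith [mul_lt_mul_of_pos_left hdlt htpos]
    exact absurd hfc (not_le.2 hfinal)


/-- **Right-symmetric points of `L¹`.** For a σ-finite measure space, a nonzero
`f ∈ L¹(X, μ)` is right-symmetric for Birkhoff-James orthogonality iff there is a
`μ`-atom `A` such that `f = 0` a.e. on `X \ A`. -/
theorem right_symmetric_points_L1 (X : Type*) [MeasurableSpace X] (μ : Measure X)
    [SigmaFinite μ] (f : Lp ℂ 1 μ) (hf : f ≠ 0) :
    (∀ g : Lp ℂ 1 μ, (∀ c : ℂ, ‖g‖ ≤ ‖g + c • f‖) → (∀ c : ℂ, ‖f‖ ≤ ‖f + c • g‖)) ↔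
      ∃ A : Set X, IsMeasAtom μ A ∧ (∀ᵐ x ∂μ.restrict Aᶜ, f x = 0) := by
  constructor
  · intro H
    exact hard_dir f hf H
  · rintro ⟨A, hA, hfA⟩ g hg c
    exact easy_dir f hf hA hfA g hg c
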